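/- arXiv:1708.08116 — 2 statements merged into one kernel-verified Lean document; each statement's English description precedes it below -/
import Mathlib

section
/- Let k be a positive integer and suppose sup_{ω∈ℝ} Σ_{ℓ∈ℤ} |ω+2πℓ|^{2k} |φ̂(ω+2πℓ)|² < ∞. Then for every f ∈ W whose k-th (weak) derivative f^{(k)} lies in L²(ℝ), one has ‖f^{(k)}‖₂² ≤ ( sup_{ω∈ℝ} Σ_{ℓ∈ℤ} |ω+2πℓ|^{2k} |φ̂(ω+2πℓ)|² ) · ‖f‖₂². -/
open MeasureTheory Real ENNReal

noncomputable def intEquivZMultiples {T : ℝ} (hT : 0 < T) : ℤ ≃ AddSubgroup.zmultiples T where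
  toFun n := ⟨n • T, AddSubgroup.zsmul_mem_zmultiples T n⟩
  invFun g := Classical.choose (AddSubgroup.mem_zmultiples_iff.mp g.2)
  left_inv n := by
    have h := Classical.choose_spec (AddSubgroup.mem_zmultiples_iff.mp
      (AddSubgroup.zsmul_mem_zmultiples T n))
    exact (zsmul_left_strictMono hT).injective h
  right_inv g := by
    have h := Classical.choose_spec (AddSubgroup.mem_zmultiples_iff.mp g.2)
    exact Subtype.ext h

lemma lintegral_periodize (F : ℝ → ℝ≥0∞) (hF : Measurable F) :
    ∫⁻ x, F x = ∫⁻ x in Set.Ioc 0 (2 * π), ∑' ℓ : ℤ, F (x + 2 * π * ℓ) := by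
  have h := (isAddFundamentalDomain_Ioc Real.two_pi_pos 0 volume).lintegral_eq_tsum' F
  rw [h, ← ((intEquivZMultiples Real.two_pi_pos)).tsum_eq, ← lintegral_tsum]
  · rw [zero_add]
    congr 1
    funext x
    rw [← (Equiv.neg ℤ).tsum_eq]
    apply tsum_congr
    intro n
    congr 1
    show -((intEquivZMultiples Real.two_pi_pos) (-n) : ℝ) + x = x + 2 * π * n
    simp [intEquivZMultiples, zsmul_eq_mul]
    ring
  · intro n
    exact (hF.comp (by fun_prop)).aemeasurable


/-- **Bernstein-type inequality in shift-invariant subspaces of `L²(ℝ)`**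
(Babenko–Ligun–Spektor, Theorem 1, inequality part).

We work on the Fourier side: `φhat` is the Fourier transform of a function
`φ ∈ L²(ℝ)` whose integer translates are orthonormal, i.e.
`∑_{ℓ∈ℤ} |φhat(ω+2πℓ)|² = 1` a.e.  A function `f` of the shift-invariant
space `W` generated by the translates of `φ` has Fourier transform
`f̂(ω) = m(ω)·φhat(ω)` with `m` a `2π`-periodic function that is square
integrable over a period.  By Plancherel,
`‖f‖₂² = (1/2π)∫_ℝ ‖f̂(ω)‖² dω` and
`‖f^{(k)}‖₂² = (1/2π)∫_ℝ |ω|^{2k} ‖f̂(ω)‖² dω`.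

If `sup_ω ∑_{ℓ∈ℤ} |ω+2πℓ|^{2k} |φhat(ω+2πℓ)|² < ∞`, then for every `f ∈ W`
with `f^{(k)} ∈ L²(ℝ)` one has
`‖f^{(k)}‖₂² ≤ (sup_ω ∑_{ℓ∈ℤ} |ω+2πℓ|^{2k} |φhat(ω+2πℓ)|²) · ‖f‖₂²`. -/
theorem bernstein_inequality_shift_invariant
    (φhat : ℝ → ℂ) (hφmeas : Measurable φhat)
    (hφL2 : MemLp φhat 2 volume)
    (horth : ∀ᵐ ω : ℝ, ∑' ℓ : ℤ, ‖φhat (ω + 2 * π * ℓ)‖ ^ 2 = 1)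
    (k : ℕ) (hk : 0 < k)
    (hfin : (⨆ ω : ℝ, ∑' ℓ : ℤ,
        ENNReal.ofReal (|ω + 2 * π * ℓ| ^ (2 * k) * ‖φhat (ω + 2 * π * ℓ)‖ ^ 2)) ≠ ⊤)
    (m : ℝ → ℂ) (hmmeas : Measurable m) (hmper : Function.Periodic m (2 * π))
    (hmL2 : IntegrableOn (fun ω => ‖m ω‖ ^ 2) (Set.Ioc 0 (2 * π)) volume)
    -- `f ∈ L²(ℝ)` (on the Fourier side, via Plancherel)
    (hfL2 : MemLp (fun ω => m ω * φhat ω) 2 volume)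
    -- `f^{(k)} ∈ L²(ℝ)` (on the Fourier side, via Plancherel)
    (hfkL2 : Integrable (fun ω => |ω| ^ (2 * k) * ‖m ω * φhat ω‖ ^ 2) volume) :
    (1 / (2 * π)) * ∫ ω : ℝ, |ω| ^ (2 * k) * ‖m ω * φhat ω‖ ^ 2 ≤
      (⨆ ω : ℝ, ∑' ℓ : ℤ,
        ENNReal.ofReal (|ω + 2 * π * ℓ| ^ (2 * k) * ‖φhat (ω + 2 * π * ℓ)‖ ^ 2)).toReal *
      ((1 / (2 * π)) * ∫ ω : ℝ, ‖m ω * φhat ω‖ ^ 2) := by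
  set S := (⨆ ω : ℝ, ∑' ℓ : ℤ,
      ENNReal.ofReal (|ω + 2 * π * ℓ| ^ (2 * k) * ‖φhat (ω + 2 * π * ℓ)‖ ^ 2)) with hSdef
  have hmf : Measurable (fun ω => m ω * φhat ω) := hmmeas.mul hφmeas
  have hFA : Measurable (fun ω => ENNReal.ofReal (|ω| ^ (2 * k) * ‖m ω * φhat ω‖ ^ 2)) := by
    fun_prop
  have hFB : Measurable (fun ω => ENNReal.ofReal (‖m ω * φhat ω‖ ^ 2)) := by fun_prop
  set A := ∫⁻ ω, ENNReal.ofReal (|ω| ^ (2 * k) * ‖m ω * φhat ω‖ ^ 2) with hAdef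
  set B := ∫⁻ ω, ENNReal.ofReal (‖m ω * φhat ω‖ ^ 2) with hBdef
  set M := ∫⁻ x in Set.Ioc 0 (2 * π), ENNReal.ofReal (‖m x‖ ^ 2) with hMdef
  have hper : ∀ (x : ℝ) (ℓ : ℤ), m (x + 2 * π * ℓ) = m x := by
    intro x ℓ
    have := (hmper.int_mul ℓ) x
    rw [show (2 : ℝ) * π * ℓ = (ℓ : ℝ) * (2 * π) by ring]
    exact this
  -- A ≤ M * S
  have hAle : A ≤ M * S := by
    rw [hAdef, lintegral_periodize _ hFA]
    have hpt : ∀ x : ℝ,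
        (∑' ℓ : ℤ, ENNReal.ofReal (|x + 2 * π * ℓ| ^ (2 * k) *
          ‖m (x + 2 * π * ℓ) * φhat (x + 2 * π * ℓ)‖ ^ 2)) ≤
        ENNReal.ofReal (‖m x‖ ^ 2) * S := by
      intro x
      have : (∑' ℓ : ℤ, ENNReal.ofReal (|x + 2 * π * ℓ| ^ (2 * k) *
          ‖m (x + 2 * π * ℓ) * φhat (x + 2 * π * ℓ)‖ ^ 2)) =
          ENNReal.ofReal (‖m x‖ ^ 2) * ∑' ℓ : ℤ,
            ENNReal.ofReal (|x + 2 * π * ℓ| ^ (2 * k) * ‖φhat (x + 2 * π * ℓ)‖ ^ 2) := by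
        rw [← ENNReal.tsum_mul_left]
        apply tsum_congr
        intro ℓ
        rw [hper x ℓ, ← ENNReal.ofReal_mul (by positivity)]
        congr 1
        rw [norm_mul, mul_pow]
        ring
      rw [this]
      exact mul_le_mul_right (le_iSup (fun ω => ∑' ℓ : ℤ,
        ENNReal.ofReal (|ω + 2 * π * ℓ| ^ (2 * k) * ‖φhat (ω + 2 * π * ℓ)‖ ^ 2)) x) _
    calc ∫⁻ x in Set.Ioc 0 (2 * π), ∑' ℓ : ℤ, ENNReal.ofReal (|x + 2 * π * ℓ| ^ (2 * k) *
          ‖m (x + 2 * π * ℓ) * φhat (x + 2 * π * ℓ)‖ ^ 2)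
        ≤ ∫⁻ x in Set.Ioc 0 (2 * π), ENNReal.ofReal (‖m x‖ ^ 2) * S :=
          lintegral_mono fun x => hpt x
      _ = M * S := by rw [hMdef, lintegral_mul_const'' _ (by fun_prop)]
  -- B = M
  have hBM : B = M := by
    rw [hBdef, lintegral_periodize _ hFB, hMdef]
    apply lintegral_congr_ae
    filter_upwards [ae_restrict_of_ae horth] with x hx
    have hsum : Summable (fun ℓ : ℤ => ‖φhat (x + 2 * π * ℓ)‖ ^ 2) := by
      by_contra h
      rw [tsum_eq_zero_of_not_summable h] at hx
      norm_num at hx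
    have h1 : (∑' ℓ : ℤ, ENNReal.ofReal (‖φhat (x + 2 * π * ℓ)‖ ^ 2)) = 1 := by
      rw [← ENNReal.ofReal_tsum_of_nonneg (fun ℓ => by positivity) hsum, hx,
        ENNReal.ofReal_one]
    calc (∑' ℓ : ℤ, ENNReal.ofReal (‖m (x + 2 * π * ℓ) * φhat (x + 2 * π * ℓ)‖ ^ 2))
        = ENNReal.ofReal (‖m x‖ ^ 2) * ∑' ℓ : ℤ,
            ENNReal.ofReal (‖φhat (x + 2 * π * ℓ)‖ ^ 2) := by
          rw [← ENNReal.tsum_mul_left]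
          apply tsum_congr
          intro ℓ
          rw [hper x ℓ, ← ENNReal.ofReal_mul (by positivity), norm_mul, mul_pow]
      _ = ENNReal.ofReal (‖m x‖ ^ 2) := by rw [h1, mul_one]
  have hAleSB : A ≤ S * B := by rw [hBM, mul_comm]; exact hAle
  -- integrability of ‖mφhat‖²
  have hint2 : Integrable (fun ω => ‖m ω * φhat ω‖ ^ 2) volume := by
    have := hfL2.integrable_norm_rpow two_ne_zero ENNReal.ofNat_ne_top
    simpa [ENNReal.toReal_ofNat, Real.rpow_natCast] using this
  have hA' : ENNReal.ofReal (∫ ω, |ω| ^ (2 * k) * ‖m ω * φhat ω‖ ^ 2) = A := by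
    rw [hAdef]
    exact ofReal_integral_eq_lintegral_ofReal hfkL2
      (Filter.Eventually.of_forall fun ω => by positivity)
  have hB' : ENNReal.ofReal (∫ ω, ‖m ω * φhat ω‖ ^ 2) = B := by
    rw [hBdef]
    exact ofReal_integral_eq_lintegral_ofReal hint2
      (Filter.Eventually.of_forall fun ω => by positivity)
  have hBne : B ≠ ⊤ := by rw [← hB']; exact ENNReal.ofReal_ne_top
  have hI1 : (0:ℝ) ≤ ∫ ω, |ω| ^ (2 * k) * ‖m ω * φhat ω‖ ^ 2 :=
    integral_nonneg fun ω => by positivity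
  have hI2 : (0:ℝ) ≤ ∫ ω, ‖m ω * φhat ω‖ ^ 2 := integral_nonneg fun ω => by positivity
  have key : (∫ ω, |ω| ^ (2 * k) * ‖m ω * φhat ω‖ ^ 2) ≤
      S.toReal * ∫ ω, ‖m ω * φhat ω‖ ^ 2 := by
    have h := ENNReal.toReal_mono (by
      exact ENNReal.mul_ne_top hfin hBne) hAleSB
    rw [ENNReal.toReal_mul] at h
    rw [← ENNReal.toReal_ofReal hI1, ← ENNReal.toReal_ofReal hI2] at *
    calc (ENNReal.ofReal (∫ ω, |ω| ^ (2 * k) * ‖m ω * φhat ω‖ ^ 2)).toReal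
        = A.toReal := by rw [hA']
      _ ≤ S.toReal * B.toReal := h
      _ = S.toReal * (ENNReal.ofReal (∫ ω, ‖m ω * φhat ω‖ ^ 2)).toReal := by rw [hB']
  have hSnn : (0:ℝ) ≤ S.toReal := ENNReal.toReal_nonneg
  have h2pi : (0:ℝ) < 1 / (2 * π) := by positivity
  calc (1 / (2 * π)) * ∫ ω : ℝ, |ω| ^ (2 * k) * ‖m ω * φhat ω‖ ^ 2
      ≤ (1 / (2 * π)) * (S.toReal * ∫ ω : ℝ, ‖m ω * φhat ω‖ ^ 2) :=
        mul_le_mul_of_nonneg_left key h2pi.le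
    _ = S.toReal * ((1 / (2 * π)) * ∫ ω : ℝ, ‖m ω * φhat ω‖ ^ 2) := by ring
end

section
/- Let n ≥ 1, let k = (k₁,…,k_n) be a multi-index of positive integers, and suppose sup_{ω∈ℝⁿ} Σ_{ℓ∈ℤⁿ} ∏_{s=1}^{n} |ω_s+2πℓ_s|^{2k_s} |φ̂(ω+2πℓ)|² < ∞, where ω+2πℓ = (ω₁+2πℓ₁,…,ω_n+2πℓ_n). Then for every f ∈ Wⁿ whose mixed weak derivative ∂^{|k|}f/∂x₁^{k₁}⋯∂x_n^{k_n} lies in L²(ℝⁿ), one has ‖∂^{|k|}f/∂x₁^{k₁}⋯∂x_n^{k_n}‖₂² ≤ ( sup_{ω∈ℝⁿ} Σ_{ℓ∈ℤⁿ} ∏_{s=1}^{n} |ω_s+2πℓ_s|^{2k_s} |φ̂(ω+2πℓ)|² ) · ‖f‖₂². -/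
open MeasureTheory Real

/-- Tiling of `ℝⁿ` by translates of a fundamental cube by the lattice `2πℤⁿ`. -/
lemma tiling_lemma (n : ℕ) :
    ∃ D : Set (Fin n → ℝ), ∀ f : (Fin n → ℝ) → ENNReal,
      (∫⁻ ω, f ω) =
        ∑' ℓ : Fin n → ℤ, ∫⁻ ω in D, f (fun s => ω s + 2 * π * ℓ s) := by
  have h2π : (2 * π : ℝ) ≠ 0 := by positivity
  set b : Module.Basis (Fin n) ℝ (Fin n → ℝ) :=
    (Pi.basisFun ℝ (Fin n)).unitsSMul (fun _ => Units.mk0 (2 * π) h2π) with hb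
  set L := Submodule.span ℤ (Set.range (b : Fin n → (Fin n → ℝ))) with hL
  set e : ↥L ≃ (Fin n → ℤ) := ((b.restrictScalars ℤ).equivFun).toEquiv with he
  haveI : Countable ↥L := Countable.of_equiv _ e.symm
  letI : MeasurableSpace ↥L := ⊤
  haveI : MeasurableVAdd ↥L (Fin n → ℝ) :=
    { measurable_const_vadd := fun c => by
        have : (fun x : Fin n → ℝ => c +ᵥ x) = fun x => (c : Fin n → ℝ) + x := rfl
        rw [this]; exact measurable_const_add _,
      measurable_vadd_const := fun x => measurable_from_top }
  haveI : VAddInvariantMeasure ↥L (Fin n → ℝ) volume :=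
    ⟨fun c s hs => by
        have : (fun x : Fin n → ℝ => c +ᵥ x) = fun x => (c : Fin n → ℝ) + x := rfl
        rw [this]; exact measure_preimage_add volume _ s⟩
  have hfd := ZSpan.isAddFundamentalDomain b (volume : Measure (Fin n → ℝ))
  refine ⟨ZSpan.fundamentalDomain b, fun f => ?_⟩
  have hcoe : ∀ ℓ : Fin n → ℤ, ((e.symm ℓ : ↥L) : Fin n → ℝ) = fun s => 2 * π * ℓ s := by
    intro ℓ
    have h1 : e.symm ℓ = ∑ s, ℓ s • (b.restrictScalars ℤ) s := by
      simp [he, Module.Basis.equivFun_symm_apply]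
    funext t
    have hbs : ∀ s, (b s : Fin n → ℝ) t = if t = s then 2 * π else 0 := by
      intro s
      simp [hb, Module.Basis.unitsSMul_apply, Pi.basisFun_apply, Pi.single_apply, Units.smul_def]
    rw [h1]
    push_cast
    simp only [Finset.sum_apply, Pi.smul_apply, Module.Basis.restrictScalars_apply, hbs, smul_eq_mul]
    rw [Finset.sum_eq_single t (fun s _ hs => by simp [Ne.symm hs]) (by simp)]
    simp [mul_comm]
  calc (∫⁻ ω, f ω) = ∑' g : ↥L, ∫⁻ ω in ZSpan.fundamentalDomain b, f (g +ᵥ ω) :=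
        hfd.lintegral_eq_tsum'' f
    _ = ∑' ℓ : Fin n → ℤ, ∫⁻ ω in ZSpan.fundamentalDomain b, f ((e.symm ℓ) +ᵥ ω) :=
        (e.symm.tsum_eq _).symm
    _ = ∑' ℓ : Fin n → ℤ, ∫⁻ ω in ZSpan.fundamentalDomain b,
          f (fun s => ω s + 2 * π * ℓ s) := by
        refine tsum_congr fun ℓ => ?_
        refine lintegral_congr fun ω => ?_
        congr 1
        funext t
        have : ((e.symm ℓ : ↥L) +ᵥ ω) = ((e.symm ℓ : ↥L) : Fin n → ℝ) + ω := rfl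
        rw [this, hcoe ℓ]
        simp [add_comm]

/-- **Multidimensional Bernstein-type inequality in shift-invariant subspaces of `L²(ℝⁿ)`**
(Babenko–Ligun–Spektor, Theorem 3, inequality part).

We work on the Fourier side: `φhat : (Fin n → ℝ) → ℂ` is the Fourier transform of
`φ ∈ L²(ℝⁿ)` whose integer translates are orthonormal, i.e.
`∑_{ℓ∈ℤⁿ} |φhat(ω+2πℓ)|² = 1` a.e.  An element `f` of the shift-invariant space `Wⁿ`
generated by these translates has `f̂(ω) = m(ω)·φhat(ω)` with `m` `2π`-periodic in each
variable and square integrable over `[0,2π]ⁿ`.  By Plancherel,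
`‖f‖₂² = (2π)⁻ⁿ ∫_{ℝⁿ} ‖f̂(ω)‖² dω` and
`‖∂^{|k|}f/∂x₁^{k₁}⋯∂x_n^{k_n}‖₂² = (2π)⁻ⁿ ∫_{ℝⁿ} ∏_s |ω_s|^{2k_s} ‖f̂(ω)‖² dω`.

If `sup_ω ∑_{ℓ∈ℤⁿ} ∏_s |ω_s+2πℓ_s|^{2k_s} |φhat(ω+2πℓ)|² < ∞`, then for every `f ∈ Wⁿ`
whose mixed weak derivative `∂^{|k|}f/∂x₁^{k₁}⋯∂x_n^{k_n}` is in `L²(ℝⁿ)`,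
`‖∂^{|k|}f/∂x₁^{k₁}⋯∂x_n^{k_n}‖₂² ≤
  (sup_ω ∑_{ℓ∈ℤⁿ} ∏_s |ω_s+2πℓ_s|^{2k_s} |φhat(ω+2πℓ)|²) · ‖f‖₂²`. -/
theorem bernstein_inequality_shift_invariant_multidim
    (n : ℕ) (hn : 1 ≤ n)
    (φhat : (Fin n → ℝ) → ℂ) (hφmeas : Measurable φhat)
    (hφL2 : MemLp φhat 2 volume)
    (horth : ∀ᵐ ω : Fin n → ℝ,
      ∑' ℓ : Fin n → ℤ, ‖φhat (fun s => ω s + 2 * π * ℓ s)‖ ^ 2 = 1)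
    (k : Fin n → ℕ) (hk : ∀ s, 0 < k s)
    (hfin : (⨆ ω : Fin n → ℝ, ∑' ℓ : Fin n → ℤ,
        ENNReal.ofReal ((∏ s, |ω s + 2 * π * ℓ s| ^ (2 * k s)) *
          ‖φhat (fun s => ω s + 2 * π * ℓ s)‖ ^ 2)) ≠ ⊤)
    (m : (Fin n → ℝ) → ℂ) (hmmeas : Measurable m)
    -- `m` is `2π`-periodic in each variable
    (hmper : ∀ (ω : Fin n → ℝ) (ℓ : Fin n → ℤ), m (fun s => ω s + 2 * π * ℓ s) = m ω)
    (hmL2 : IntegrableOn (fun ω => ‖m ω‖ ^ 2)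
      (Set.univ.pi fun _ : Fin n => Set.Ioc (0 : ℝ) (2 * π)) volume)
    -- `f ∈ L²(ℝⁿ)` (on the Fourier side, via Plancherel)
    (hfL2 : MemLp (fun ω => m ω * φhat ω) 2 volume)
    -- the mixed weak derivative is in `L²(ℝⁿ)` (on the Fourier side, via Plancherel)
    (hfkL2 : Integrable
      (fun ω : Fin n → ℝ => (∏ s, |ω s| ^ (2 * k s)) * ‖m ω * φhat ω‖ ^ 2) volume) :
    (1 / (2 * π) ^ n) * ∫ ω : Fin n → ℝ, (∏ s, |ω s| ^ (2 * k s)) * ‖m ω * φhat ω‖ ^ 2 ≤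
      (⨆ ω : Fin n → ℝ, ∑' ℓ : Fin n → ℤ,
        ENNReal.ofReal ((∏ s, |ω s + 2 * π * ℓ s| ^ (2 * k s)) *
          ‖φhat (fun s => ω s + 2 * π * ℓ s)‖ ^ 2)).toReal *
      ((1 / (2 * π) ^ n) * ∫ ω : Fin n → ℝ, ‖m ω * φhat ω‖ ^ 2) := by
  classical
  set B : ENNReal := ⨆ ω : Fin n → ℝ, ∑' ℓ : Fin n → ℤ,
      ENNReal.ofReal ((∏ s, |ω s + 2 * π * ℓ s| ^ (2 * k s)) *
        ‖φhat (fun s => ω s + 2 * π * ℓ s)‖ ^ 2) with hBdef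
  obtain ⟨D, hD⟩ := tiling_lemma n
  -- F and G
  set F : (Fin n → ℝ) → ℝ := fun ω => (∏ s, |ω s| ^ (2 * k s)) * ‖m ω * φhat ω‖ ^ 2 with hF
  set G : (Fin n → ℝ) → ℝ := fun ω => ‖m ω * φhat ω‖ ^ 2 with hG
  have hFnn : ∀ ω, 0 ≤ F ω := fun ω => by positivity
  have hGnn : ∀ ω, 0 ≤ G ω := fun ω => by positivity
  have hshiftmeas : ∀ ℓ : Fin n → ℤ,
      Measurable (fun ω : Fin n → ℝ => (fun s => ω s + 2 * π * ℓ s)) := fun ℓ =>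
    measurable_pi_lambda _ fun s => (measurable_pi_apply s).add_const _
  have hFmeas : Measurable F := by
    apply Measurable.mul
    · exact Finset.measurable_prod _ fun s _ => ((measurable_pi_apply s).abs.pow_const _)
    · exact ((hmmeas.mul hφmeas).norm.pow_const _)
  have hGmeas : Measurable G := ((hmmeas.mul hφmeas).norm.pow_const _)
  -- key pointwise identity for shifted F
  have hFshift : ∀ (ω : Fin n → ℝ) (ℓ : Fin n → ℤ),
      ENNReal.ofReal (F (fun s => ω s + 2 * π * ℓ s)) =
        ENNReal.ofReal (‖m ω‖ ^ 2) *
        ENNReal.ofReal ((∏ s, |ω s + 2 * π * ℓ s| ^ (2 * k s)) *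
          ‖φhat (fun s => ω s + 2 * π * ℓ s)‖ ^ 2) := by
    intro ω ℓ
    rw [← ENNReal.ofReal_mul (by positivity)]
    congr 1
    simp only [hF, hmper ω ℓ, norm_mul, mul_pow]
    ring
  have hGshift : ∀ (ω : Fin n → ℝ) (ℓ : Fin n → ℤ),
      ENNReal.ofReal (G (fun s => ω s + 2 * π * ℓ s)) =
        ENNReal.ofReal (‖m ω‖ ^ 2) *
        ENNReal.ofReal (‖φhat (fun s => ω s + 2 * π * ℓ s)‖ ^ 2) := by
    intro ω ℓ
    rw [← ENNReal.ofReal_mul (by positivity)]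
    congr 1
    simp only [hG, hmper ω ℓ, norm_mul, mul_pow]
  -- G lintegral over D
  have hGeq : (∫⁻ ω, ENNReal.ofReal (G ω)) = ∫⁻ ω in D, ENNReal.ofReal (‖m ω‖ ^ 2) := by
    have hswap := lintegral_tsum (μ := volume.restrict D)
      (f := fun (ℓ : Fin n → ℤ) (ω : Fin n → ℝ) =>
        ENNReal.ofReal (G (fun s => ω s + 2 * π * ℓ s)))
      (fun ℓ => ((hGmeas.comp (hshiftmeas ℓ)).ennreal_ofReal).aemeasurable)
    rw [hD (fun ω => ENNReal.ofReal (G ω)), ← hswap]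
    refine lintegral_congr_ae ((ae_restrict_of_ae ?_))
    filter_upwards [horth] with ω hω
    have hsummable : Summable (fun ℓ : Fin n → ℤ =>
        ‖φhat (fun s => ω s + 2 * π * ℓ s)‖ ^ 2) := by
      by_contra hns
      rw [tsum_eq_zero_of_not_summable hns] at hω
      norm_num at hω
    calc ∑' ℓ : Fin n → ℤ, ENNReal.ofReal (G (fun s => ω s + 2 * π * ℓ s))
        = ENNReal.ofReal (‖m ω‖ ^ 2) *
            ∑' ℓ : Fin n → ℤ, ENNReal.ofReal (‖φhat (fun s => ω s + 2 * π * ℓ s)‖ ^ 2) := by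
          rw [← ENNReal.tsum_mul_left]; exact tsum_congr fun ℓ => hGshift ω ℓ
      _ = ENNReal.ofReal (‖m ω‖ ^ 2) := by
          rw [← ENNReal.ofReal_tsum_of_nonneg (fun ℓ => by positivity) hsummable, hω]
          simp
  -- F lintegral bound
  have hFle : (∫⁻ ω, ENNReal.ofReal (F ω)) ≤ B * ∫⁻ ω, ENNReal.ofReal (G ω) := by
    have hswap := lintegral_tsum (μ := volume.restrict D)
      (f := fun (ℓ : Fin n → ℤ) (ω : Fin n → ℝ) =>
        ENNReal.ofReal (F (fun s => ω s + 2 * π * ℓ s)))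
      (fun ℓ => ((hFmeas.comp (hshiftmeas ℓ)).ennreal_ofReal).aemeasurable)
    rw [hD (fun ω => ENNReal.ofReal (F ω)), ← hswap, hGeq]
    rw [← lintegral_const_mul' B _ hfin]
    refine lintegral_mono fun ω => ?_
    calc ∑' ℓ : Fin n → ℤ, ENNReal.ofReal (F (fun s => ω s + 2 * π * ℓ s))
        = ENNReal.ofReal (‖m ω‖ ^ 2) *
            ∑' ℓ : Fin n → ℤ, ENNReal.ofReal ((∏ s, |ω s + 2 * π * ℓ s| ^ (2 * k s)) *
              ‖φhat (fun s => ω s + 2 * π * ℓ s)‖ ^ 2) := by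
          rw [← ENNReal.tsum_mul_left]; exact tsum_congr fun ℓ => hFshift ω ℓ
      _ ≤ ENNReal.ofReal (‖m ω‖ ^ 2) * B := by
          refine mul_le_mul_right ?_ _
          exact le_iSup (fun ω : Fin n → ℝ => ∑' ℓ : Fin n → ℤ,
            ENNReal.ofReal ((∏ s, |ω s + 2 * π * ℓ s| ^ (2 * k s)) *
              ‖φhat (fun s => ω s + 2 * π * ℓ s)‖ ^ 2)) ω
      _ = B * ENNReal.ofReal (‖m ω‖ ^ 2) := mul_comm _ _
  -- G integrable
  have hGint : Integrable G volume := by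
    have := hfL2.integrable_norm_rpow (by norm_num) (by norm_num)
    have h2 : ((2:ENNReal)).toReal = ((2:ℕ):ℝ) := by norm_num
    rw [h2] at this
    simp_rw [Real.rpow_natCast] at this
    exact this
  have hGlt : (∫⁻ ω, ENNReal.ofReal (G ω)) ≠ ⊤ := hGint.lintegral_lt_top.ne
  -- convert to real integrals
  have hFint : (∫ ω, F ω) = (∫⁻ ω, ENNReal.ofReal (F ω)).toReal := by
    rw [integral_eq_lintegral_of_nonneg_ae (Filter.Eventually.of_forall hFnn)
      hFmeas.aestronglyMeasurable]
  have hGinteq : (∫ ω, G ω) = (∫⁻ ω, ENNReal.ofReal (G ω)).toReal := by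
    rw [integral_eq_lintegral_of_nonneg_ae (Filter.Eventually.of_forall hGnn)
      hGmeas.aestronglyMeasurable]
  have hmain : (∫ ω, F ω) ≤ B.toReal * ∫ ω, G ω := by
    rw [hFint, hGinteq, ← ENNReal.toReal_mul]
    exact ENNReal.toReal_mono (ENNReal.mul_ne_top hfin hGlt) hFle
  have hc : (0:ℝ) ≤ 1 / (2 * π) ^ n := by positivity
  calc (1 / (2 * π) ^ n) * ∫ ω, F ω ≤ (1 / (2 * π) ^ n) * (B.toReal * ∫ ω, G ω) :=
        mul_le_mul_of_nonneg_left hmain hc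
    _ = B.toReal * ((1 / (2 * π) ^ n) * ∫ ω, G ω) := by ring
end
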